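/- If D' ⊂ D where D' is an orbit of G_{v1}(k) and D is an orbit of G_{v0}(k) on P^1(F), then D is also an orbit of G_e(k) = ⟨G_{v0}(k), G_{v1}(k)⟩. -/

import Mathlib

open Matrix Pointwise
open scoped OnePoint

noncomputable section

/-- `ϖ` is a uniformizer of the nonarchimedean field `F`. -/
def IsUniformizer (F : Type*) [NormedField F] (ϖ : F) : Prop :=
  ϖ ≠ 0 ∧ ‖ϖ‖ < 1 ∧ ∀ x : F, ‖x‖ < 1 → ‖x‖ ≤ ‖ϖ‖

/-- The principal congruence subgroup `G_{v₀}(k)` of level `k`: matrices in `GL₂(𝒪)`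
congruent to the identity modulo `ϖ^k` (entrywise, each entry of `g - 1` lies in `ϖ^k 𝒪`,
i.e. has norm at most `‖ϖ‖^k`). -/
def Gv0 (F : Type*) [NormedField F] (ϖ : F) (k : ℕ) : Set (GL (Fin 2) F) :=
  {g | ‖(g : Matrix (Fin 2) (Fin 2) F) 0 0 - 1‖ ≤ ‖ϖ‖ ^ k ∧
       ‖(g : Matrix (Fin 2) (Fin 2) F) 0 1‖ ≤ ‖ϖ‖ ^ k ∧
       ‖(g : Matrix (Fin 2) (Fin 2) F) 1 0‖ ≤ ‖ϖ‖ ^ k ∧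
       ‖(g : Matrix (Fin 2) (Fin 2) F) 1 1 - 1‖ ≤ ‖ϖ‖ ^ k}

/-- The diagonal matrix `diag(ϖ, 1)` as an element of `GL₂(F)`. -/
def dmat (F : Type*) [Field F] (ϖ : F) (h : ϖ ≠ 0) : GL (Fin 2) F :=
  Matrix.GeneralLinearGroup.mkOfDetNeZero !![ϖ, 0; 0, 1]
    (by simpa [Matrix.det_fin_two_of] using h)

/-- `G_{v₁}(k) = diag(ϖ,1) · G_{v₀}(k) · diag(ϖ,1)⁻¹`. -/
def Gv1 (F : Type*) [NormedField F] (ϖ : F) (h : ϖ ≠ 0) (k : ℕ) : Set (GL (Fin 2) F) :=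
  (fun g => dmat F ϖ h * g * (dmat F ϖ h)⁻¹) '' Gv0 F ϖ k

/-- The explicit set `H` of matrices `[[1+ϖ^k a, ϖ^k b],[ϖ^{k-1} c, 1+ϖ^k d]]`, `a,b,c,d ∈ 𝒪`;
this is the edge group `G_e(k)`. -/
def Ge (F : Type*) [NormedField F] (ϖ : F) (k : ℕ) : Set (GL (Fin 2) F) :=
  {g | ‖(g : Matrix (Fin 2) (Fin 2) F) 0 0 - 1‖ ≤ ‖ϖ‖ ^ k ∧
       ‖(g : Matrix (Fin 2) (Fin 2) F) 0 1‖ ≤ ‖ϖ‖ ^ k ∧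
       ‖(g : Matrix (Fin 2) (Fin 2) F) 1 0‖ ≤ ‖ϖ‖ ^ (k - 1) ∧
       ‖(g : Matrix (Fin 2) (Fin 2) F) 1 1 - 1‖ ≤ ‖ϖ‖ ^ k}

/-- The explicit description of `G_{v₁}(k)`: matrices
`[[1+ϖ^k a, ϖ^{k+1} b],[ϖ^{k-1} c, 1+ϖ^k d]]` with `a,b,c,d ∈ 𝒪`. -/
def Gv1ex (F : Type*) [NormedField F] (ϖ : F) (k : ℕ) : Set (GL (Fin 2) F) :=
  {g | ‖(g : Matrix (Fin 2) (Fin 2) F) 0 0 - 1‖ ≤ ‖ϖ‖ ^ k ∧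
       ‖(g : Matrix (Fin 2) (Fin 2) F) 0 1‖ ≤ ‖ϖ‖ ^ (k + 1) ∧
       ‖(g : Matrix (Fin 2) (Fin 2) F) 1 0‖ ≤ ‖ϖ‖ ^ (k - 1) ∧
       ‖(g : Matrix (Fin 2) (Fin 2) F) 1 1 - 1‖ ≤ ‖ϖ‖ ^ k}

open scoped Classical in
/-- The right Möbius action of `g = [[a,b],[c,d]]` on `ℙ¹(F) = F ∪ {∞}` (here modelled as
`Option F`, with `none = ∞`): `z·g = (az+c)/(bz+d)`, `∞·g = a/b`, with value `∞` when the
denominator vanishes. -/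
def moeb (F : Type*) [Field F] (g : Matrix (Fin 2) (Fin 2) F) : Option F → Option F
  | Option.some z => if g 0 1 * z + g 1 1 = 0 then Option.none
      else Option.some ((g 0 0 * z + g 1 0) / (g 0 1 * z + g 1 1))
  | Option.none => if g 0 1 = 0 then Option.none else Option.some (g 0 0 / g 0 1)

/-- The orbit of `z ∈ ℙ¹(F)` under a set `S` of elements of `GL₂(F)` acting on the right by
Möbius transformations. -/
def orb (F : Type*) [Field F] (S : Set (GL (Fin 2) F)) (z : Option F) : Set (Option F) :=
  {w | ∃ g ∈ S, moeb F (g : Matrix (Fin 2) (Fin 2) F) z = w}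

/-- `D` is an orbit of `S` on `ℙ¹(F)`. -/
def IsOrbit (F : Type*) [Field F] (S : Set (GL (Fin 2) F)) (D : Set (Option F)) : Prop :=
  ∃ z, D = orb F S z

/-- The region `B_w(∞, |ϖ|) = {w ∈ ℙ¹(F) : |1/w| ≤ |ϖ|} = {|w| ≥ |ϖ|⁻¹} ∪ {∞}`. -/
def regionInfty (F : Type*) [NormedField F] (ϖ : F) : Set (Option F) :=
  {w | w = Option.none ∨ ∃ z : F, w = Option.some z ∧ ‖ϖ‖⁻¹ ≤ ‖z‖}

/-- The coordinate `1/w` on `ℙ¹(F)`, with `1/∞ = 0`. -/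
def invc (F : Type*) [Field F] : Option F → F
  | Option.none => 0
  | Option.some z => z⁻¹

/-- The residue field of `F` has cardinality `q`: there are exactly `q` classes in
`𝒪/(ϖ)`, witnessed by a set of representatives. -/
def ResidueCard (F : Type*) [NormedField F] (ϖ : F) (q : ℕ) : Prop :=
  ∃ s : Finset F, s.card = q ∧ (∀ x ∈ s, ‖x‖ ≤ 1) ∧
    ∀ x : F, ‖x‖ ≤ 1 → ∃! y, y ∈ s ∧ ‖x - y‖ ≤ ‖ϖ‖

/-- The conjugate `h S h⁻¹` of a set of matrices. -/
def conjSet (F : Type*) [Field F] (h : GL (Fin 2) F) (S : Set (GL (Fin 2) F)) :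
    Set (GL (Fin 2) F) :=
  (fun g => h * g * h⁻¹) '' S

/-- The matrix `g_α = [[1,0],[α,ϖ]]` as an element of `GL₂(F)`. -/
def galpha (F : Type*) [Field F] (ϖ α : F) (h : ϖ ≠ 0) : GL (Fin 2) F :=
  Matrix.GeneralLinearGroup.mkOfDetNeZero !![1, 0; α, ϖ]
    (by simpa [Matrix.det_fin_two_of] using h)

/-- The diagonal matrix `diag(1, ϖ^n)` as an element of `GL₂(F)`. -/
def dmatN (F : Type*) [Field F] (ϖ : F) (h : ϖ ≠ 0) (n : ℕ) : GL (Fin 2) F :=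
  Matrix.GeneralLinearGroup.mkOfDetNeZero !![1, 0; 0, ϖ ^ n]
    (by simpa [Matrix.det_fin_two_of] using pow_ne_zero n h)


section AuxDev

variable {F : Type*} [NontriviallyNormedField F] [IsUltrametricDist F]

lemma uadd' {x y : F} {A : ℝ} (hx : ‖x‖ ≤ A) (hy : ‖y‖ ≤ A) : ‖x + y‖ ≤ A :=
  (IsUltrametricDist.norm_add_le_max x y).trans (max_le hx hy)

lemma usub' {x y : F} {A : ℝ} (hx : ‖x‖ ≤ A) (hy : ‖y‖ ≤ A) : ‖x - y‖ ≤ A := by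
  rw [sub_eq_add_neg]; exact uadd' hx (by simpa using hy)

lemma unorm_eq_one {x : F} (h : ‖x - 1‖ < 1) : ‖x‖ = 1 := by
  have h1 : ‖x‖ ≤ 1 := by
    have e : x = (x - 1) + 1 := by ring
    rw [e]; exact uadd' h.le (by simp)
  rcases lt_or_eq_of_le h1 with h2 | h2
  · exfalso
    have e : (1 : F) = x - (x - 1) := by ring
    have hlt : (1 : ℝ) < 1 := by
      calc (1:ℝ) = ‖(1:F)‖ := by simp
        _ = ‖x - (x-1)‖ := by rw [← e]
        _ ≤ max ‖x‖ ‖x - 1‖ := usub' (le_max_left _ _) (le_max_right _ _)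
        _ < 1 := max_lt h2 h
    linarith
  · exact h2

lemma norm_le_one_of_near {x : F} {A : ℝ} (h : ‖x - 1‖ ≤ A) (hA : A ≤ 1) : ‖x‖ ≤ 1 := by
  have e : x = (x - 1) + 1 := by ring
  rw [e]; exact uadd' (h.trans hA) (by simp)

variable {ϖ : F} {k : ℕ}

lemma Gv0_subset_Ge (hϖ : IsUniformizer F ϖ) (hk : 1 ≤ k) : Gv0 F ϖ k ⊆ Ge F ϖ k := by
  have hε0 : 0 < ‖ϖ‖ := norm_pos_iff.2 hϖ.1
  have hkk : ‖ϖ‖ ^ k ≤ ‖ϖ‖ ^ (k - 1) :=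
    pow_le_pow_of_le_one hε0.le hϖ.2.1.le (Nat.sub_le k 1)
  rintro g ⟨h1, h2, h3, h4⟩
  exact ⟨h1, h2, h3.trans hkk, h4⟩

lemma Ge_one (hϖ : IsUniformizer F ϖ) : (1 : GL (Fin 2) F) ∈ Ge F ϖ k := by
  refine ⟨?_, ?_, ?_, ?_⟩ <;> simp [Matrix.one_apply] <;> positivity

lemma Ge_mul (hϖ : IsUniformizer F ϖ) (hk : 1 ≤ k) {g h : GL (Fin 2) F}
    (hg : g ∈ Ge F ϖ k) (hh : h ∈ Ge F ϖ k) : g * h ∈ Ge F ϖ k := by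
  obtain ⟨ha1, hb1, hc1, hd1⟩ := hg
  obtain ⟨ha2, hb2, hc2, hd2⟩ := hh
  have hε0 : 0 < ‖ϖ‖ := norm_pos_iff.2 hϖ.1
  have hε1 : ‖ϖ‖ < 1 := hϖ.2.1
  have hk1 : ‖ϖ‖ ^ k ≤ 1 := pow_le_one₀ hε0.le hε1.le
  have hk2 : ‖ϖ‖ ^ (k-1) ≤ 1 := pow_le_one₀ hε0.le hε1.le
  set m1 := (g : Matrix (Fin 2) (Fin 2) F) with hm1
  set m2 := (h : Matrix (Fin 2) (Fin 2) F) with hm2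
  have hA1 : ‖m1 0 0‖ ≤ 1 := norm_le_one_of_near ha1 hk1
  have hA2 : ‖m2 0 0‖ ≤ 1 := norm_le_one_of_near ha2 hk1
  have hD1 : ‖m1 1 1‖ ≤ 1 := norm_le_one_of_near hd1 hk1
  have hD2 : ‖m2 1 1‖ ≤ 1 := norm_le_one_of_near hd2 hk1
  have hmul : ∀ i j, ((g * h : GL (Fin 2) F) : Matrix (Fin 2) (Fin 2) F) i j
      = m1 i 0 * m2 0 j + m1 i 1 * m2 1 j := by
    intro i j
    simp [hm1, hm2, Matrix.mul_apply, Fin.sum_univ_two]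
  refine ⟨?_, ?_, ?_, ?_⟩ <;> rw [hmul]
  · have e : m1 0 0 * m2 0 0 + m1 0 1 * m2 1 0 - 1
        = (m1 0 0 - 1) * m2 0 0 + (m2 0 0 - 1) + m1 0 1 * m2 1 0 := by ring
    rw [e]
    refine uadd' (uadd' ?_ ha2) ?_
    · rw [norm_mul]
      nlinarith [norm_nonneg (m1 0 0 - 1), norm_nonneg (m2 0 0)]
    · rw [norm_mul]
      nlinarith [norm_nonneg (m1 0 1), norm_nonneg (m2 1 0), pow_nonneg hε0.le k,
        pow_nonneg hε0.le (k-1)]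
  · refine uadd' ?_ ?_ <;> rw [norm_mul]
    · nlinarith [norm_nonneg (m1 0 0), norm_nonneg (m2 0 1), pow_nonneg hε0.le k]
    · nlinarith [norm_nonneg (m1 0 1), norm_nonneg (m2 1 1), pow_nonneg hε0.le k]
  · refine uadd' ?_ ?_ <;> rw [norm_mul]
    · nlinarith [norm_nonneg (m1 1 0), norm_nonneg (m2 0 0), pow_nonneg hε0.le (k-1)]
    · nlinarith [norm_nonneg (m1 1 1), norm_nonneg (m2 1 0), pow_nonneg hε0.le (k-1)]
  · have e : m1 1 0 * m2 0 1 + m1 1 1 * m2 1 1 - 1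
        = m1 1 0 * m2 0 1 + (m1 1 1 - 1) * m2 1 1 + (m2 1 1 - 1) := by ring
    rw [e]
    refine uadd' (uadd' ?_ ?_) hd2
    · rw [norm_mul]
      nlinarith [norm_nonneg (m1 1 0), norm_nonneg (m2 0 1), pow_nonneg hε0.le k,
        pow_nonneg hε0.le (k-1)]
    · rw [norm_mul]
      nlinarith [norm_nonneg (m1 1 1 - 1), norm_nonneg (m2 1 1)]

lemma Ge_inv (hϖ : IsUniformizer F ϖ) (hk : 1 ≤ k) {g : GL (Fin 2) F}
    (hg : g ∈ Ge F ϖ k) : g⁻¹ ∈ Ge F ϖ k := by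
  obtain ⟨ha, hb, hc, hd⟩ := hg
  have hε0 : 0 < ‖ϖ‖ := norm_pos_iff.2 hϖ.1
  have hε1 : ‖ϖ‖ < 1 := hϖ.2.1
  have hεk1 : ‖ϖ‖ ^ k < 1 := pow_lt_one₀ hε0.le hε1 (by omega)
  have hk1 : ‖ϖ‖ ^ k ≤ 1 := hεk1.le
  have hk2 : ‖ϖ‖ ^ (k-1) ≤ 1 := pow_le_one₀ hε0.le hε1.le
  set m := (g : Matrix (Fin 2) (Fin 2) F) with hm
  have hA : ‖m 0 0‖ ≤ 1 := norm_le_one_of_near ha hk1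
  have hD : ‖m 1 1‖ ≤ 1 := norm_le_one_of_near hd hk1
  have hdet2 : m.det = m 0 0 * m 1 1 - m 0 1 * m 1 0 := Matrix.det_fin_two m
  have hΔ1 : ‖m.det - 1‖ ≤ ‖ϖ‖ ^ k := by
    rw [hdet2]
    have e : m 0 0 * m 1 1 - m 0 1 * m 1 0 - 1
        = ((m 0 0 - 1) * m 1 1 + (m 1 1 - 1)) - m 0 1 * m 1 0 := by ring
    rw [e]
    refine usub' (uadd' ?_ hd) ?_
    · rw [norm_mul]
      nlinarith [norm_nonneg (m 0 0 - 1), norm_nonneg (m 1 1)]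
    · rw [norm_mul]
      nlinarith [norm_nonneg (m 0 1), norm_nonneg (m 1 0), pow_nonneg hε0.le k,
        pow_nonneg hε0.le (k-1)]
  have hΔn : ‖m.det‖ = 1 := unorm_eq_one (lt_of_le_of_lt hΔ1 hεk1)
  have hΔ0 : m.det ≠ 0 := fun h0 => by rw [h0] at hΔn; simp at hΔn
  have hinv : ((g⁻¹ : GL (Fin 2) F) : Matrix (Fin 2) (Fin 2) F)
      = (m.det)⁻¹ • !![m 1 1, -(m 0 1); -(m 1 0), m 0 0] := by
    rw [Matrix.GeneralLinearGroup.coe_inv, Matrix.inv_def, Matrix.adjugate_fin_two,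
      Ring.inverse_eq_inv']
  have h00 : ((g⁻¹ : GL (Fin 2) F) : Matrix (Fin 2) (Fin 2) F) 0 0 = (m.det)⁻¹ * m 1 1 := by
    rw [hinv]; simp
  have h01 : ((g⁻¹ : GL (Fin 2) F) : Matrix (Fin 2) (Fin 2) F) 0 1
      = (m.det)⁻¹ * (-(m 0 1)) := by
    rw [hinv]; simp
  have h10 : ((g⁻¹ : GL (Fin 2) F) : Matrix (Fin 2) (Fin 2) F) 1 0
      = (m.det)⁻¹ * (-(m 1 0)) := by
    rw [hinv]; simp
  have h11 : ((g⁻¹ : GL (Fin 2) F) : Matrix (Fin 2) (Fin 2) F) 1 1 = (m.det)⁻¹ * m 0 0 := by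
    rw [hinv]; simp
  refine ⟨?_, ?_, ?_, ?_⟩
  · rw [h00]
    have e : (m.det)⁻¹ * m 1 1 - 1 = (m 1 1 - m.det) * (m.det)⁻¹ := by
      field_simp
    rw [e, norm_mul, norm_inv, hΔn, inv_one, mul_one]
    have e2 : m 1 1 - m.det = (m 1 1 - 1) - (m.det - 1) := by ring
    rw [e2]; exact usub' hd hΔ1
  · rw [h01, norm_mul, norm_inv, hΔn, inv_one, one_mul, norm_neg]; exact hb
  · rw [h10, norm_mul, norm_inv, hΔn, inv_one, one_mul, norm_neg]; exact hc
  · rw [h11]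
    have e : (m.det)⁻¹ * m 0 0 - 1 = (m 0 0 - m.det) * (m.det)⁻¹ := by
      field_simp
    rw [e, norm_mul, norm_inv, hΔn, inv_one, mul_one]
    have e2 : m 0 0 - m.det = (m 0 0 - 1) - (m.det - 1) := by ring
    rw [e2]; exact usub' ha hΔ1

lemma dmat_coe (h : ϖ ≠ 0) :
    ((dmat F ϖ h : GL (Fin 2) F) : Matrix (Fin 2) (Fin 2) F) = !![ϖ, 0; 0, 1] := rfl

lemma dmat_inv_coe (h : ϖ ≠ 0) :
    (((dmat F ϖ h)⁻¹ : GL (Fin 2) F) : Matrix (Fin 2) (Fin 2) F) = !![ϖ⁻¹, 0; 0, 1] := by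
  rw [Matrix.GeneralLinearGroup.coe_inv, dmat_coe]
  rw [Matrix.inv_def, Matrix.adjugate_fin_two_of, Matrix.det_fin_two_of, Ring.inverse_eq_inv']
  ext i j
  fin_cases i <;> fin_cases j <;>
    simp [inv_mul_cancel₀ h, mul_comm]

lemma Gv1_subset_Ge (hϖ : IsUniformizer F ϖ) (hk : 1 ≤ k) :
    Gv1 F ϖ hϖ.1 k ⊆ Ge F ϖ k := by
  obtain ⟨k', rfl⟩ : ∃ k', k = k' + 1 := ⟨k - 1, by omega⟩
  have hε0 : 0 < ‖ϖ‖ := norm_pos_iff.2 hϖ.1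
  have hε1 : ‖ϖ‖ < 1 := hϖ.2.1
  rintro _ ⟨g, ⟨ha, hb, hc, hd⟩, rfl⟩
  set m := (g : Matrix (Fin 2) (Fin 2) F) with hm
  have hcoe : ((dmat F ϖ hϖ.1 * g * (dmat F ϖ hϖ.1)⁻¹ : GL (Fin 2) F) :
      Matrix (Fin 2) (Fin 2) F) = !![m 0 0, ϖ * m 0 1; ϖ⁻¹ * m 1 0, m 1 1] := by
    have h1 : ((dmat F ϖ hϖ.1 * g * (dmat F ϖ hϖ.1)⁻¹ : GL (Fin 2) F) :
        Matrix (Fin 2) (Fin 2) F) = !![ϖ, 0; 0, 1] * m * !![ϖ⁻¹, 0; 0, 1] := by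
      rw [Units.val_mul, Units.val_mul, dmat_inv_coe, dmat_coe]
    have hϖ0 : ϖ ≠ 0 := hϖ.1
    rw [h1]
    ext i j
    fin_cases i <;> fin_cases j <;>
      simp only [Matrix.mul_apply, Fin.sum_univ_two] <;> simp <;> try field_simp
  refine ⟨?_, ?_, ?_, ?_⟩ <;> rw [hcoe]
  · simpa using ha
  · show ‖(!![m 0 0, ϖ * m 0 1; ϖ⁻¹ * m 1 0, m 1 1]) 0 1‖ ≤ ‖ϖ‖ ^ (k' + 1)
    have he : (!![m 0 0, ϖ * m 0 1; ϖ⁻¹ * m 1 0, m 1 1]) 0 1 = ϖ * m 0 1 := by simp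
    rw [he, norm_mul]
    calc ‖ϖ‖ * ‖m 0 1‖ ≤ ‖ϖ‖ * ‖ϖ‖ ^ (k' + 1) :=
          mul_le_mul_of_nonneg_left hb hε0.le
      _ = ‖ϖ‖ ^ (k' + 2) := by ring
      _ ≤ ‖ϖ‖ ^ (k' + 1) := pow_le_pow_of_le_one hε0.le hε1.le (by omega)
  · show ‖(!![m 0 0, ϖ * m 0 1; ϖ⁻¹ * m 1 0, m 1 1]) 1 0‖ ≤ ‖ϖ‖ ^ ((k' + 1) - 1)
    have he : (!![m 0 0, ϖ * m 0 1; ϖ⁻¹ * m 1 0, m 1 1]) 1 0 = ϖ⁻¹ * m 1 0 := by simp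
    rw [he, norm_mul, norm_inv]
    have hεne : ‖ϖ‖ ≠ 0 := hε0.ne'
    calc ‖ϖ‖⁻¹ * ‖m 1 0‖ ≤ ‖ϖ‖⁻¹ * ‖ϖ‖ ^ (k' + 1) :=
          mul_le_mul_of_nonneg_left hc (by positivity)
      _ = ‖ϖ‖ ^ k' := by
          rw [pow_succ, ← mul_assoc]
          rw [mul_comm (‖ϖ‖⁻¹) (‖ϖ‖ ^ k')]
          rw [mul_assoc]
          rw [inv_mul_cancel₀ hεne, mul_one]
      _ = ‖ϖ‖ ^ ((k' + 1) - 1) := by norm_num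
  · simpa using hd

lemma closure_subset_Ge (hϖ : IsUniformizer F ϖ) (hk : 1 ≤ k) :
    ((Subgroup.closure (Gv0 F ϖ k ∪ Gv1 F ϖ hϖ.1 k) :
      Subgroup (GL (Fin 2) F)) : Set (GL (Fin 2) F)) ⊆ Ge F ϖ k := by
  set H : Subgroup (GL (Fin 2) F) :=
    { carrier := Ge F ϖ k
      one_mem' := Ge_one hϖ
      mul_mem' := fun ha hb => Ge_mul hϖ hk ha hb
      inv_mem' := fun ha => Ge_inv hϖ hk ha } with hH
  intro g hg
  have hle : Subgroup.closure (Gv0 F ϖ k ∪ Gv1 F ϖ hϖ.1 k) ≤ H :=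
    (Subgroup.closure_le H).2 (Set.union_subset (Gv0_subset_Ge hϖ hk) (Gv1_subset_Ge hϖ hk))
  exact hle hg

lemma moeb_one (z : Option F) :
    moeb F ((1 : GL (Fin 2) F) : Matrix (Fin 2) (Fin 2) F) z = z := by
  cases z with
  | none => simp [moeb, Matrix.one_apply]
  | some w => simp [moeb, Matrix.one_apply]

lemma moeb_Ge (hϖ : IsUniformizer F ϖ) (hk : 1 ≤ k) {g : GL (Fin 2) F}
    (hg : g ∈ Ge F ϖ k) {z : Option F} (hz : z ∈ regionInfty F ϖ) :
    moeb F (g : Matrix (Fin 2) (Fin 2) F) z ∈ regionInfty F ϖ ∧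
      ‖invc F (moeb F (g : Matrix (Fin 2) (Fin 2) F) z) - invc F z‖ ≤ ‖ϖ‖ ^ k := by
  obtain ⟨k', rfl⟩ : ∃ k', k = k' + 1 := ⟨k - 1, by omega⟩
  obtain ⟨ha, hb, hc, hd⟩ := hg
  simp only [Nat.add_sub_cancel] at hc
  set m := (g : Matrix (Fin 2) (Fin 2) F) with hm
  have hε0 : 0 < ‖ϖ‖ := norm_pos_iff.2 hϖ.1
  have hε1 : ‖ϖ‖ < 1 := hϖ.2.1
  have hεk1 : ‖ϖ‖ ^ (k' + 1) < 1 := pow_lt_one₀ hε0.le hε1 (by omega)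
  have hkε : ‖ϖ‖ ^ (k' + 1) ≤ ‖ϖ‖ := by
    calc ‖ϖ‖ ^ (k' + 1) ≤ ‖ϖ‖ ^ 1 := pow_le_pow_of_le_one hε0.le hε1.le (by omega)
      _ = ‖ϖ‖ := pow_one _
  have hka : ‖m 0 0‖ = 1 := unorm_eq_one (lt_of_le_of_lt ha hεk1)
  have hkd : ‖m 1 1‖ = 1 := unorm_eq_one (lt_of_le_of_lt hd hεk1)
  rcases hz with hz | ⟨w, hzw, hw⟩
  · subst hz
    by_cases hb0 : m 0 1 = 0
    · have hmo : moeb F m Option.none = Option.none := by simp [moeb, hb0]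
      rw [hmo]
      refine ⟨Or.inl rfl, ?_⟩
      show ‖invc F Option.none - invc F Option.none‖ ≤ _
      simp [invc]
    · have hmo : moeb F m Option.none = Option.some (m 0 0 / m 0 1) := by
        simp [moeb, hb0]
      rw [hmo]
      have hbpos : 0 < ‖m 0 1‖ := norm_pos_iff.2 hb0
      constructor
      · right
        refine ⟨_, rfl, ?_⟩
        rw [norm_div, hka, one_div]
        exact inv_anti₀ hbpos (hb.trans hkε)
      · show ‖(m 0 0 / m 0 1)⁻¹ - invc F Option.none‖ ≤ _
        have h0 : invc F Option.none = 0 := rfl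
        rw [h0, sub_zero, norm_inv, norm_div, hka, one_div, inv_inv]
        exact hb
  · subst hzw
    have hεinv : (0:ℝ) < ‖ϖ‖⁻¹ := by positivity
    have hw0 : w ≠ 0 := by
      intro h0; rw [h0] at hw; simp at hw; exact hϖ.1 hw
    set u := w⁻¹ with hu'
    have hwpos : 0 < ‖w‖ := norm_pos_iff.2 hw0
    have hu : ‖u‖ ≤ ‖ϖ‖ := by
      rw [hu', norm_inv]
      calc ‖w‖⁻¹ ≤ (‖ϖ‖⁻¹)⁻¹ := inv_anti₀ hεinv hw
        _ = ‖ϖ‖ := inv_inv _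
    have hinvz : invc F (Option.some w) = u := rfl
    by_cases hden : m 0 1 * w + m 1 1 = 0
    · have hmo : moeb F m (Option.some w) = Option.none := by simp [moeb, hden]
      rw [hmo]
      refine ⟨Or.inl rfl, ?_⟩
      have hbw : ‖m 0 1‖ * ‖w‖ = 1 := by
        have h1 : m 0 1 * w = - m 1 1 := by linear_combination hden
        calc ‖m 0 1‖ * ‖w‖ = ‖m 0 1 * w‖ := (norm_mul _ _).symm
          _ = ‖m 1 1‖ := by rw [h1, norm_neg]
          _ = 1 := hkd
      have hueq : ‖u‖ = ‖m 0 1‖ := by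
        rw [hu', norm_inv]
        exact (eq_inv_of_mul_eq_one_left hbw).symm
      show ‖invc F Option.none - u‖ ≤ _
      have h0 : invc F Option.none = 0 := rfl
      rw [h0, zero_sub, norm_neg, hueq]
      exact hb
    · set N := m 0 0 + m 1 0 * u with hN
      set Dn := m 0 1 + m 1 1 * u with hDn
      have hNnorm : ‖N - 1‖ ≤ ‖ϖ‖ ^ (k' + 1) := by
        have e : N - 1 = (m 0 0 - 1) + m 1 0 * u := by rw [hN]; ring
        rw [e]
        refine uadd' ha ?_
        rw [norm_mul]
        calc ‖m 1 0‖ * ‖u‖ ≤ ‖ϖ‖ ^ k' * ‖ϖ‖ :=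
              mul_le_mul hc hu (norm_nonneg u) (by positivity)
          _ = ‖ϖ‖ ^ (k' + 1) := (pow_succ _ _).symm
      have hN1 : ‖N‖ = 1 := unorm_eq_one (lt_of_le_of_lt hNnorm hεk1)
      have hN0 : N ≠ 0 := fun h0 => by rw [h0] at hN1; simp at hN1
      have hnum : m 0 0 * w + m 1 0 = w * N := by
        rw [hN, hu']; field_simp
      have hdeneq : m 0 1 * w + m 1 1 = w * Dn := by
        rw [hDn, hu']; field_simp
      have hDn0 : Dn ≠ 0 := by
        intro h0; apply hden; rw [hdeneq, h0, mul_zero]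
      have hWeq : (m 0 0 * w + m 1 0) / (m 0 1 * w + m 1 1) = N / Dn := by
        rw [hnum, hdeneq, mul_div_mul_left _ _ hw0]
      have hmo : moeb F m (Option.some w) = Option.some (N / Dn) := by
        simp [moeb, hden, hWeq]
      have hinv2 : invc F (Option.some (N / Dn)) = Dn / N := by
        show (N / Dn)⁻¹ = Dn / N
        rw [inv_div]
      have hdiff : Dn / N - u = (Dn - u * N) / N := by
        field_simp
      have hDuN : Dn - u * N
          = m 0 1 + (m 1 1 - 1) * u - (m 0 0 - 1) * u - m 1 0 * (u * u) := by
        rw [hDn, hN]; ring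
      have hεk'nn : (0:ℝ) ≤ ‖ϖ‖ ^ (k' + 1) := by positivity
      have hbound : ‖Dn - u * N‖ ≤ ‖ϖ‖ ^ (k' + 1) := by
        rw [hDuN]
        refine usub' (usub' (uadd' hb ?_) ?_) ?_
        · rw [norm_mul]
          nlinarith [norm_nonneg (m 1 1 - 1), norm_nonneg u, hd, hu, hε1]
        · rw [norm_mul]
          nlinarith [norm_nonneg (m 0 0 - 1), norm_nonneg u, ha, hu, hε1]
        · rw [norm_mul, norm_mul]
          have h1 : ‖m 1 0‖ * (‖u‖ * ‖u‖) ≤ ‖ϖ‖ ^ k' * (‖ϖ‖ * ‖ϖ‖) :=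
            mul_le_mul hc (mul_le_mul hu hu (norm_nonneg u) hε0.le)
              (by positivity) (by positivity)
          have h2 : ‖ϖ‖ ^ k' * (‖ϖ‖ * ‖ϖ‖) = ‖ϖ‖ ^ (k' + 1) * ‖ϖ‖ := by ring
          calc ‖m 1 0‖ * (‖u‖ * ‖u‖) ≤ ‖ϖ‖ ^ (k' + 1) * ‖ϖ‖ := by rw [← h2]; exact h1
            _ ≤ ‖ϖ‖ ^ (k' + 1) * 1 := mul_le_mul_of_nonneg_left hε1.le hεk'nn
            _ = ‖ϖ‖ ^ (k' + 1) := mul_one _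
      have hdiffb : ‖Dn / N - u‖ ≤ ‖ϖ‖ ^ (k' + 1) := by
        rw [hdiff, norm_div, hN1, div_one]; exact hbound
      have hu2 : ‖Dn / N‖ ≤ ‖ϖ‖ := by
        have e : Dn / N = u + (Dn / N - u) := by ring
        rw [e]; exact uadd' hu (hdiffb.trans hkε)
      have hDnN0 : Dn / N ≠ 0 := div_ne_zero hDn0 hN0
      have hDnNpos : 0 < ‖Dn / N‖ := norm_pos_iff.2 hDnN0
      refine ⟨?_, ?_⟩
      · rw [hmo]; right
        refine ⟨_, rfl, ?_⟩
        have e : N / Dn = (Dn / N)⁻¹ := (inv_div Dn N).symm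
        rw [e, norm_inv]
        exact inv_anti₀ hDnNpos hu2
      · rw [hmo, hinv2, hinvz]; exact hdiffb

lemma mem_orb_Gv0 (hϖ : IsUniformizer F ϖ) (hk : 1 ≤ k) {z w : Option F}
    (hz : z ∈ regionInfty F ϖ) (hw : w ∈ regionInfty F ϖ)
    (hclose : ‖invc F w - invc F z‖ ≤ ‖ϖ‖ ^ k) : w ∈ orb F (Gv0 F ϖ k) z := by
  have hε0 : 0 < ‖ϖ‖ := norm_pos_iff.2 hϖ.1
  have hεinv : (0:ℝ) < ‖ϖ‖⁻¹ := by positivity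
  set t := invc F w - invc F z with ht
  refine ⟨Matrix.GeneralLinearGroup.mkOfDetNeZero !![1, t; 0, 1]
    (by simp [Matrix.det_fin_two_of]), ?_, ?_⟩
  · refine ⟨?_, ?_, ?_, ?_⟩
    · show ‖(!![(1:F), t; 0, 1]) 0 0 - 1‖ ≤ _
      simp
    · show ‖(!![(1:F), t; 0, 1]) 0 1‖ ≤ _
      simpa using hclose
    · show ‖(!![(1:F), t; 0, 1]) 1 0‖ ≤ _
      simp
    · show ‖(!![(1:F), t; 0, 1]) 1 1 - 1‖ ≤ _
      simp
  · show moeb F (!![(1:F), t; 0, 1]) z = w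
    rcases hz with hz | ⟨v, hzv, hv⟩
    · subst hz
      have hts : t = invc F w := by
        rw [ht, show invc F Option.none = (0:F) from rfl, sub_zero]
      rcases hw with hw | ⟨x, hwx, hx⟩
      · subst hw
        have ht0 : t = 0 := by
          rw [hts, show invc F Option.none = (0:F) from rfl]
        simp [moeb, ht0]
      · subst hwx
        have hx0 : x ≠ 0 := by
          intro h0; rw [h0] at hx; simp at hx; exact hϖ.1 hx
        have htx : t = x⁻¹ := by
          rw [hts, show invc F (Option.some x) = x⁻¹ from rfl]
        have ht0 : t ≠ 0 := by rw [htx]; exact inv_ne_zero hx0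
        simp [moeb, ht0, htx, hx0]
    · subst hzv
      have hv0 : v ≠ 0 := by
        intro h0; rw [h0] at hv; simp at hv; exact hϖ.1 hv
      have hts : t = invc F w - v⁻¹ := by
        rw [ht, show invc F (Option.some v) = v⁻¹ from rfl]
      rcases hw with hw | ⟨x, hwx, hx⟩
      · subst hw
        have hden : t * v + 1 = 0 := by
          rw [hts, show invc F Option.none = (0:F) from rfl, zero_sub]
          field_simp
          ring
        simp [moeb, hden]
      · subst hwx
        have hx0 : x ≠ 0 := by
          intro h0; rw [h0] at hx; simp at hx; exact hϖ.1 hx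
        have hts' : t = x⁻¹ - v⁻¹ := by
          rw [hts, show invc F (Option.some x) = x⁻¹ from rfl]
        have hden : t * v + 1 = v * x⁻¹ := by
          rw [hts']; field_simp; ring
        have hdne : t * v + 1 ≠ 0 := by
          rw [hden]; exact mul_ne_zero hv0 (inv_ne_zero hx0)
        have hgoal : moeb F (!![(1:F), t; 0, 1]) (Option.some v)
            = Option.some (v / (t * v + 1)) := by
          simp [moeb, hdne]
        rw [hgoal]
        congr 1
        rw [hden]
        field_simp

lemma not_region (hϖ : IsUniformizer F ϖ) {z : Option F} (hz : z ∉ regionInfty F ϖ) :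
    ∃ w, z = Option.some w ∧ ‖w‖ ≤ 1 := by
  have hε0 : 0 < ‖ϖ‖ := norm_pos_iff.2 hϖ.1
  cases z with
  | none => exact absurd (Or.inl rfl) hz
  | some w =>
    refine ⟨w, rfl, ?_⟩
    have hlt : ‖w‖ < ‖ϖ‖⁻¹ := by
      by_contra hle
      exact hz (Or.inr ⟨w, rfl, le_of_not_gt hle⟩)
    have h1 : ‖ϖ * w‖ < 1 := by
      rw [norm_mul]
      calc ‖ϖ‖ * ‖w‖ < ‖ϖ‖ * ‖ϖ‖⁻¹ := by
            exact mul_lt_mul_of_pos_left hlt hε0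
        _ = 1 := mul_inv_cancel₀ hε0.ne'
    have h2 := hϖ.2.2 _ h1
    rw [norm_mul] at h2
    nlinarith

lemma one_mem_Gv0 (hϖ : IsUniformizer F ϖ) : (1 : GL (Fin 2) F) ∈ Gv0 F ϖ k := by
  refine ⟨?_, ?_, ?_, ?_⟩ <;> simp [Matrix.one_apply] <;> positivity

lemma one_mem_Gv1 (hϖ : IsUniformizer F ϖ) : (1 : GL (Fin 2) F) ∈ Gv1 F ϖ hϖ.1 k :=
  ⟨1, one_mem_Gv0 hϖ, by simp⟩

lemma tmat_mem_Gv1 (hϖ : IsUniformizer F ϖ) (hk : 1 ≤ k) :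
    Matrix.GeneralLinearGroup.mkOfDetNeZero !![(1:F), 0; ϖ^(k-1), 1]
      (by simp [Matrix.det_fin_two_of]) ∈ Gv1 F ϖ hϖ.1 k := by
  have hε0 : 0 < ‖ϖ‖ := norm_pos_iff.2 hϖ.1
  refine ⟨Matrix.GeneralLinearGroup.mkOfDetNeZero !![(1:F), 0; ϖ^k, 1]
    (by simp [Matrix.det_fin_two_of]), ?_, ?_⟩
  · refine ⟨?_, ?_, ?_, ?_⟩
    · show ‖(!![(1:F), 0; ϖ^k, 1]) 0 0 - 1‖ ≤ _
      simp
    · show ‖(!![(1:F), 0; ϖ^k, 1]) 0 1‖ ≤ _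
      simp
    · show ‖(!![(1:F), 0; ϖ^k, 1]) 1 0‖ ≤ _
      simp [norm_pow]
    · show ‖(!![(1:F), 0; ϖ^k, 1]) 1 1 - 1‖ ≤ _
      simp
  · rw [mul_inv_eq_iff_eq_mul]
    apply Units.ext
    show (!![ϖ, 0; 0, 1] : Matrix (Fin 2) (Fin 2) F) * !![(1:F), 0; ϖ^k, 1]
        = !![(1:F), 0; ϖ^(k-1), 1] * !![ϖ, 0; 0, 1]
    have hpow : ϖ^(k-1) * ϖ = ϖ^k := by
      rw [← pow_succ]
      congr 1
      omega
    rw [Matrix.mul_fin_two, Matrix.mul_fin_two]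
    apply Matrix.ext
    intro i j
    fin_cases i <;> fin_cases j <;> simp [hpow]

lemma moeb_trans (t w : F) : moeb F (!![(1:F), 0; t, 1]) (Option.some w)
    = Option.some (w + t) := by
  simp [moeb]


lemma moeb_Gv0_out (hϖ : IsUniformizer F ϖ) (hk : 1 ≤ k) {w0 : F} (hw0 : ‖w0‖ ≤ 1)
    {g : GL (Fin 2) F} (hg : g ∈ Gv0 F ϖ k) :
    ∃ w', moeb F (g : Matrix (Fin 2) (Fin 2) F) (Option.some w0) = Option.some w' ∧
      ‖w' - w0‖ ≤ ‖ϖ‖ ^ k ∧ ‖w'‖ ≤ 1 := by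
  obtain ⟨ha, hb, hc, hd⟩ := hg
  have hε0 : 0 < ‖ϖ‖ := norm_pos_iff.2 hϖ.1
  have hε1 : ‖ϖ‖ < 1 := hϖ.2.1
  have hεk1 : ‖ϖ‖ ^ k < 1 := pow_lt_one₀ hε0.le hε1 (by omega)
  set m := (g : Matrix (Fin 2) (Fin 2) F) with hm
  have hden1 : ‖m 0 1 * w0 + m 1 1 - 1‖ ≤ ‖ϖ‖ ^ k := by
    have e : m 0 1 * w0 + m 1 1 - 1 = m 0 1 * w0 + (m 1 1 - 1) := by ring
    rw [e]
    refine uadd' ?_ hd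
    rw [norm_mul]
    nlinarith [norm_nonneg (m 0 1), norm_nonneg w0, pow_nonneg hε0.le k]
  have hden : ‖m 0 1 * w0 + m 1 1‖ = 1 := unorm_eq_one (lt_of_le_of_lt hden1 hεk1)
  have hden0 : m 0 1 * w0 + m 1 1 ≠ 0 := fun h0 => by rw [h0] at hden; simp at hden
  have hmo : moeb F m (Option.some w0)
      = Option.some ((m 0 0 * w0 + m 1 0) / (m 0 1 * w0 + m 1 1)) := by
    simp [moeb, hden0]
  have hdiffb : ‖(m 0 0 * w0 + m 1 0) / (m 0 1 * w0 + m 1 1) - w0‖ ≤ ‖ϖ‖ ^ k := by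
    have e : (m 0 0 * w0 + m 1 0) / (m 0 1 * w0 + m 1 1) - w0
        = (((m 0 0 - 1) * w0 + m 1 0 - m 0 1 * (w0 * w0)) - (m 1 1 - 1) * w0) /
          (m 0 1 * w0 + m 1 1) := by
      rw [eq_div_iff hden0, sub_mul, div_mul_cancel₀ _ hden0]
      ring
    rw [e, norm_div, hden, div_one]
    refine usub' (usub' (uadd' ?_ hc) ?_) ?_
    · rw [norm_mul]
      nlinarith [norm_nonneg (m 0 0 - 1), norm_nonneg w0]
    · rw [norm_mul, norm_mul]
      calc ‖m 0 1‖ * (‖w0‖ * ‖w0‖) ≤ ‖ϖ‖ ^ k * (1 * 1) :=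
            mul_le_mul hb (mul_le_mul hw0 hw0 (norm_nonneg _) zero_le_one)
              (by positivity) (by positivity)
        _ = ‖ϖ‖ ^ k := by ring
    · rw [norm_mul]
      nlinarith [norm_nonneg (m 1 1 - 1), norm_nonneg w0]
  refine ⟨_, hmo, hdiffb, ?_⟩
  have e : (m 0 0 * w0 + m 1 0) / (m 0 1 * w0 + m 1 1)
      = w0 + ((m 0 0 * w0 + m 1 0) / (m 0 1 * w0 + m 1 1) - w0) := by ring
  rw [e]
  exact uadd' hw0 (hdiffb.trans hεk1.le)

end AuxDev

theorem statement14 (p : ℕ) [Fact p.Prime] (F : Type*) [NontriviallyNormedField F]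
    [IsUltrametricDist F] [NormedAlgebra ℚ_[p] F] [FiniteDimensional ℚ_[p] F]
    (ϖ : F) (hϖ : IsUniformizer F ϖ) (k : ℕ) (hk : 1 ≤ k) :
    ∀ D D' : Set (Option F), IsOrbit F (Gv0 F ϖ k) D → IsOrbit F (Gv1 F ϖ hϖ.1 k) D' →
      D' ⊆ D →
      IsOrbit F ((Subgroup.closure (Gv0 F ϖ k ∪ Gv1 F ϖ hϖ.1 k) :
        Subgroup (GL (Fin 2) F)) : Set (GL (Fin 2) F)) D := by
  intro D D' hD hD' hsub
  obtain ⟨z0, rfl⟩ := hD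
  obtain ⟨z1, rfl⟩ := hD'
  have hε0 : 0 < ‖ϖ‖ := norm_pos_iff.2 hϖ.1
  have hε1 : ‖ϖ‖ < 1 := hϖ.2.1
  have hz1D : z1 ∈ orb F (Gv0 F ϖ k) z0 := hsub ⟨1, one_mem_Gv1 hϖ, moeb_one z1⟩
  obtain ⟨g, hg, hgz⟩ := hz1D
  have hz0 : z0 ∈ regionInfty F ϖ := by
    by_contra hz0
    obtain ⟨w0, rfl, hw0⟩ := not_region hϖ hz0
    obtain ⟨w1, hw1eq, hw1, hw1n⟩ := moeb_Gv0_out hϖ hk hw0 hg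
    have hz1eq : z1 = Option.some w1 := hgz.symm.trans hw1eq
    have hT : moeb F ((Matrix.GeneralLinearGroup.mkOfDetNeZero !![(1:F), 0; ϖ^(k-1), 1]
        (by simp [Matrix.det_fin_two_of]) : GL (Fin 2) F) : Matrix (Fin 2) (Fin 2) F) z1
        = Option.some (w1 + ϖ^(k-1)) := by
      rw [hz1eq]
      exact moeb_trans _ _
    have hmem : Option.some (w1 + ϖ^(k-1)) ∈ orb F (Gv0 F ϖ k) (Option.some w0) :=
      hsub ⟨_, tmat_mem_Gv1 hϖ hk, hT⟩
    obtain ⟨h, hh, hhz⟩ := hmem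
    obtain ⟨w2, hw2eq, hw2, _⟩ := moeb_Gv0_out hϖ hk hw0 hh
    have hw2val : w2 = w1 + ϖ^(k-1) := by
      rw [hw2eq] at hhz
      exact Option.some.inj hhz
    have hkey : ‖(ϖ:F)^(k-1)‖ ≤ ‖ϖ‖^k := by
      have e : (ϖ:F)^(k-1) = (w2 - w0) - (w1 - w0) := by rw [hw2val]; ring
      rw [e]; exact usub' hw2 hw1
    rw [norm_pow] at hkey
    have hlt : ‖ϖ‖^k < ‖ϖ‖^(k-1) := pow_lt_pow_right_of_lt_one₀ hε0 hε1 (by omega)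
    linarith
  refine ⟨z0, ?_⟩
  ext w
  constructor
  · rintro ⟨g', hg', hgw⟩
    exact ⟨g', Subgroup.subset_closure (Set.mem_union_left _ hg'), hgw⟩
  · rintro ⟨γ, hγ, rfl⟩
    have hγGe : γ ∈ Ge F ϖ k := closure_subset_Ge hϖ hk hγ
    obtain ⟨hreg, hclose⟩ := moeb_Ge hϖ hk hγGe hz0
    exact mem_orb_Gv0 hϖ hk hz0 hreg hclose
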